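/- For all natural numbers d ≥ 1, D ≥ 1 and m ≥ 0, setting N = D + d − 1, the following identity holds in ℤ: C(m+N, N) = D·C(m+d-1, d) + C(m+d-1, d-1) + ∑_{i=2}^{D} (-1)^{i}·(i-1)·C(D, i)·C(m+N-i, N). -/

import Mathlib

open Finset

/-- Finite-difference identity: the `A`-th alternating difference of `t ↦ C(t, N)`. -/
lemma key_diff (N : ℕ) : ∀ (A : ℕ), A ≤ N → ∀ t, A ≤ t →
    (∑ j ∈ Finset.range (A + 1),
        (-1 : ℤ) ^ j * (A.choose j : ℤ) * ((t - j).choose N : ℤ))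
      = ((t - A).choose (N - A) : ℤ) := by
  intro A
  induction A with
  | zero => intro _ t _; simp
  | succ A ih =>
    intro hAN t hAt
    have hA : A ≤ N := Nat.le_of_succ_le hAN
    have hAt' : A ≤ t - 1 := by omega
    have h1 : (∑ j ∈ Finset.range (A + 2),
          (-1 : ℤ) ^ j * ((A + 1).choose j : ℤ) * ((t - j).choose N : ℤ))
        = (∑ j ∈ Finset.range (A + 1),
            (-1 : ℤ) ^ j * (A.choose j : ℤ) * ((t - j).choose N : ℤ))
          - (∑ j ∈ Finset.range (A + 1),
              (-1 : ℤ) ^ j * (A.choose j : ℤ) * ((t - 1 - j).choose N : ℤ)) := by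
      rw [Finset.sum_range_succ'
        (fun j => (-1 : ℤ) ^ j * ((A + 1).choose j : ℤ) * ((t - j).choose N : ℤ)) (A + 1)]
      rw [Finset.sum_range_succ'
        (fun j => (-1 : ℤ) ^ j * ((A).choose j : ℤ) * ((t - j).choose N : ℤ)) A]
      have hsplit : ∀ j ∈ Finset.range (A + 1),
          (-1 : ℤ) ^ (j + 1) * ((A + 1).choose (j + 1) : ℤ) * ((t - (j + 1)).choose N : ℤ)
            = (-1 : ℤ) ^ (j + 1) * (A.choose j : ℤ) * ((t - (j + 1)).choose N : ℤ)
              + (-1 : ℤ) ^ (j + 1) * (A.choose (j + 1) : ℤ) * ((t - (j + 1)).choose N : ℤ) := by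
        intro j _
        rw [Nat.choose_succ_succ]
        push_cast
        ring
      rw [Finset.sum_congr rfl hsplit, Finset.sum_add_distrib]
      have e1 : (∑ j ∈ Finset.range (A + 1),
          (-1 : ℤ) ^ (j + 1) * (A.choose j : ℤ) * ((t - (j + 1)).choose N : ℤ))
          = - ∑ j ∈ Finset.range (A + 1),
              (-1 : ℤ) ^ j * (A.choose j : ℤ) * ((t - 1 - j).choose N : ℤ) := by
        rw [← Finset.sum_neg_distrib]
        refine Finset.sum_congr rfl fun j _ => ?_
        have : t - (j + 1) = t - 1 - j := by omega
        rw [this]; ring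
      have e2 : (∑ j ∈ Finset.range (A + 1),
          (-1 : ℤ) ^ (j + 1) * (A.choose (j + 1) : ℤ) * ((t - (j + 1)).choose N : ℤ))
          = (∑ j ∈ Finset.range A,
            (-1 : ℤ) ^ (j + 1) * (A.choose (j + 1) : ℤ) * ((t - (j + 1)).choose N : ℤ)) := by
        rw [Finset.sum_range_succ]
        simp
      rw [e1, e2]
      simp only [Nat.choose_zero_right, Nat.cast_one, Nat.sub_zero]
      ring
    rw [h1, ih hA t (Nat.le_of_succ_le hAt), ih hA (t - 1) hAt']
    have ht' : t - A = (t - (A + 1)) + 1 := by omega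
    have hN' : N - A = (N - (A + 1)) + 1 := by omega
    have ht'' : t - 1 - A = t - (A + 1) := by omega
    rw [ht', hN', ht'', Nat.choose_succ_succ]
    push_cast
    ring

/-- Numerical consistency between the two computations of `h⁰(X, L^⊗m)` for a variety
of minimal degree `D` and dimension `d` in `P^N`, `N = D + d - 1`. -/
theorem stmt_3 (d D m N : ℕ) (hd : 1 ≤ d) (hD : 1 ≤ D) (hN : N = D + d - 1) :
    ((m + N).choose N : ℤ)
      = (D : ℤ) * ((m + d - 1).choose d : ℤ) + ((m + d - 1).choose (d - 1) : ℤ)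
        + ∑ i ∈ Finset.Icc 2 D,
            (-1 : ℤ) ^ i * ((i - 1 : ℕ) : ℤ) * (D.choose i : ℤ)
              * ((m + N - i).choose N : ℤ) := by
  set f : ℕ → ℤ := fun i =>
    (-1 : ℤ) ^ i * ((i - 1 : ℕ) : ℤ) * (D.choose i : ℤ) * ((m + N - i).choose N : ℤ) with hf
  -- extend the sum to range (D+1): the i = 0, 1 terms vanish
  have hIcc : (∑ i ∈ Finset.Icc 2 D, f i) = ∑ i ∈ Finset.range (D + 1), f i := by
    have hset : Finset.range (D + 1) = insert 0 (insert 1 (Finset.Icc 2 D)) := by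
      ext x
      simp only [Finset.mem_range, Finset.mem_insert, Finset.mem_Icc]
      omega
    rw [hset, Finset.sum_insert (by simp), Finset.sum_insert (by simp)]
    have h0 : f 0 = 0 := by simp [hf]
    have h1 : f 1 = 0 := by simp [hf]
    rw [h0, h1]
    ring
  -- peel off i = 0
  have hpeel : (∑ i ∈ Finset.range (D + 1), f i) = ∑ j ∈ Finset.range D, f (j + 1) := by
    rw [Finset.sum_range_succ' f D]
    have h0 : f 0 = 0 := by simp [hf]
    rw [h0, add_zero]
  -- rewrite each term using j * C(D, j+1) = D * C(D-1, j) - C(D, j+1)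
  have hterm : ∀ j ∈ Finset.range D, f (j + 1)
      = -((D : ℤ) * ((-1 : ℤ) ^ j * ((D - 1).choose j : ℤ) * ((m + N - 1 - j).choose N : ℤ)))
        + (-1 : ℤ) ^ j * (D.choose (j + 1) : ℤ) * ((m + N - 1 - j).choose N : ℤ) := by
    intro j _
    have hmul : ((j : ℤ) + 1) * (D.choose (j + 1) : ℤ) = (D : ℤ) * ((D - 1).choose j : ℤ) := by
      have := Nat.add_one_mul_choose_eq (D - 1) j
      have hD1 : D - 1 + 1 = D := by omega
      simp only [Nat.succ_eq_add_one, hD1] at this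
      have h2 : (D : ℤ) * (((D - 1).choose j : ℕ) : ℤ)
          = ((D.choose (j + 1) : ℕ) : ℤ) * ((j : ℤ) + 1) := by exact_mod_cast this
      linear_combination -h2
    have hidx : m + N - (j + 1) = m + N - 1 - j := by omega
    have hcast : (((j + 1) - 1 : ℕ) : ℤ) = (j : ℤ) := by simp
    simp only [hf, hidx, hcast, pow_succ]
    linear_combination (-(-1 : ℤ) ^ j * ((m + N - 1 - j).choose N : ℤ)) * hmul
  -- the first auxiliary sum
  have hU := key_diff N (D - 1) (by omega) (m + N - 1) (by omega)
  have hDe : D - 1 + 1 = D := by omega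
  rw [hDe] at hU
  have e1 : m + N - 1 - (D - 1) = m + d - 1 := by omega
  have e2 : N - (D - 1) = d := by omega
  rw [e1, e2] at hU
  -- the second auxiliary sum
  have hV := key_diff N D (by omega) (m + N) (by omega)
  rw [Finset.sum_range_succ'
    (fun j => (-1 : ℤ) ^ j * (D.choose j : ℤ) * ((m + N - j).choose N : ℤ)) D] at hV
  have e3 : m + N - D = m + d - 1 := by omega
  have e4 : N - D = d - 1 := by omega
  rw [e3, e4] at hV
  have hV' : (∑ j ∈ Finset.range D,
      (-1 : ℤ) ^ j * (D.choose (j + 1) : ℤ) * ((m + N - 1 - j).choose N : ℤ))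
      = ((m + N).choose N : ℤ) - ((m + d - 1).choose (d - 1) : ℤ) := by
    have hcg : ∀ j ∈ Finset.range D,
        (-1 : ℤ) ^ (j + 1) * (D.choose (j + 1) : ℤ) * ((m + N - (j + 1)).choose N : ℤ)
          = -((-1 : ℤ) ^ j * (D.choose (j + 1) : ℤ) * ((m + N - 1 - j).choose N : ℤ)) := by
      intro j _
      have : m + N - (j + 1) = m + N - 1 - j := by omega
      rw [this, pow_succ]
      ring
    rw [Finset.sum_congr rfl hcg, Finset.sum_neg_distrib] at hV
    simp only [pow_zero, Nat.choose_zero_right, Nat.cast_one, Nat.sub_zero, one_mul] at hV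
    linarith
  -- put everything together
  have hsum : (∑ j ∈ Finset.range D, f (j + 1))
      = -((D : ℤ) * ((m + d - 1).choose d : ℤ))
        + (((m + N).choose N : ℤ) - ((m + d - 1).choose (d - 1) : ℤ)) := by
    rw [Finset.sum_congr rfl hterm, Finset.sum_add_distrib, Finset.sum_neg_distrib,
      ← Finset.mul_sum, hU, hV']
  rw [hIcc, hpeel, hsum]
  ring
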